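/- In configuration B, the only 4-element collinear subsets of the 16 points are the four quadruples Z_a, Z_b, Z_c, Z_d; that is, whenever four distinct points of configuration B lie on a common line of ℙ³, those four points are exactly one of Z_a, Z_b, Z_c, Z_d. In particular there are exactly 4 lines containing 4 of the configuration points. -/

import Mathlib

open Projectivization
open scoped LinearAlgebra.Projectivization

/-- Homogeneous coordinates of the 16 points of configuration B (the harmonic
configuration): `vB x i` is the `i`-th point of the quadruple on the `x`-th line. -/
def vB : Fin 4 → Fin 4 → Fin 4 → ℂ :=
  ![![![1,0,0,0], ![0,0,1,0], ![1,0,1,0], ![1,0,-1,0]],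
    ![![0,1,0,0], ![0,0,0,1], ![0,1,0,1], ![0,1,0,-1]],
    ![![1,1,0,0], ![0,0,1,1], ![1,1,1,1], ![1,1,-1,-1]],
    ![![1,0,0,-1], ![0,1,1,0], ![1,1,1,-1], ![-1,1,1,1]]]

lemma vB_ne_zero : ∀ x i, vB x i ≠ 0 := by
  intro x i
  fin_cases x <;> fin_cases i <;> simp [vB, Matrix.cons_eq_zero_iff]

/-- The 16 points of configuration B in `ℙ³`. -/
noncomputable def ptB (x i : Fin 4) : ℙ ℂ (Fin 4 → ℂ) :=
  Projectivization.mk ℂ (vB x i) (vB_ne_zero x i)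

/-- The quadruple `Z_x` of configuration B (`x = 0,1,2,3` for `a,b,c,d`). -/
noncomputable def ZB (x : Fin 4) : Set (ℙ ℂ (Fin 4 → ℂ)) := Set.range (ptB x)

/-- Configuration B as a set of 16 points of `ℙ³`. -/
noncomputable def configB : Set (ℙ ℂ (Fin 4 → ℂ)) := ⋃ x, ZB x

/-! ### Auxiliary integer computations -/

/-- Integer version of the coordinates `vB`. -/
def wB : Fin 4 → Fin 4 → Fin 4 → ℤ :=
  ![![![1,0,0,0], ![0,0,1,0], ![1,0,1,0], ![1,0,-1,0]],
    ![![0,1,0,0], ![0,0,0,1], ![0,1,0,1], ![0,1,0,-1]],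
    ![![1,1,0,0], ![0,0,1,1], ![1,1,1,1], ![1,1,-1,-1]],
    ![![1,0,0,-1], ![0,1,1,0], ![1,1,1,-1], ![-1,1,1,1]]]

lemma vB_cast (x i l : Fin 4) : vB x i l = ((wB x i l : ℤ) : ℂ) := by
  fin_cases x <;> fin_cases i <;> fin_cases l <;> norm_num [vB, wB]

/-- 2×2 minor of a pair of integer vectors. -/
def m2 (u v : Fin 4 → ℤ) (p q : Fin 4) : ℤ := u p * v q - u q * v p

/-- 3×3 minor of a triple of integer vectors. -/
def m3 (u v w : Fin 4 → ℤ) (p q r : Fin 4) : ℤ :=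
  u p * v q * w r - u p * v r * w q - u q * v p * w r +
    u q * v r * w p + u r * v p * w q - u r * v q * w p

lemma indep2 (x i y j : Fin 4) (p q : Fin 4) (h : m2 (wB x i) (wB y j) p q ≠ 0) :
    LinearIndependent ℂ ![vB x i, vB y j] := by
  set A : Matrix (Fin 2) (Fin 2) ℂ :=
    Matrix.of fun a b => ![vB x i, vB y j] a (![p, q] b) with hA
  have hdet : A.det = ((m2 (wB x i) (wB y j) p q : ℤ) : ℂ) := by
    rw [Matrix.det_fin_two]
    show vB x i p * vB y j q - vB x i q * vB y j p = _
    simp only [vB_cast, m2]; push_cast; ring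
  have hu : LinearIndependent ℂ fun a => A a :=
    Matrix.linearIndependent_rows_iff_isUnit.2 ((Matrix.isUnit_iff_isUnit_det A).2
      (isUnit_iff_ne_zero.2 (by rw [hdet]; exact_mod_cast h)))
  exact LinearIndependent.of_comp (LinearMap.funLeft ℂ ℂ ![p, q]) hu

lemma indep3 (x i y j z k : Fin 4) (p q r : Fin 4)
    (h : m3 (wB x i) (wB y j) (wB z k) p q r ≠ 0) :
    LinearIndependent ℂ ![vB x i, vB y j, vB z k] := by
  set A : Matrix (Fin 3) (Fin 3) ℂ :=
    Matrix.of fun a b => ![vB x i, vB y j, vB z k] a (![p, q, r] b) with hA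
  have hdet : A.det = ((m3 (wB x i) (wB y j) (wB z k) p q r : ℤ) : ℂ) := by
    rw [Matrix.det_fin_three]
    show vB x i p * vB y j q * vB z k r - vB x i p * vB y j r * vB z k q -
        vB x i q * vB y j p * vB z k r + vB x i q * vB y j r * vB z k p +
        vB x i r * vB y j p * vB z k q - vB x i r * vB y j q * vB z k p = _
    simp only [vB_cast, m3]; push_cast; ring
  have hu : LinearIndependent ℂ fun a => A a :=
    Matrix.linearIndependent_rows_iff_isUnit.2 ((Matrix.isUnit_iff_isUnit_det A).2
      (isUnit_iff_ne_zero.2 (by rw [hdet]; exact_mod_cast h)))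
  exact LinearIndependent.of_comp (LinearMap.funLeft ℂ ℂ ![p, q, r]) hu

lemma factPair : ∀ x i y j : Fin 4, ¬(x = y ∧ i = j) →
    ∃ p q, m2 (wB x i) (wB y j) p q ≠ 0 := by decide

lemma factA : ∀ x i j z k : Fin 4, i ≠ j → z ≠ x →
    ∃ p q r, m3 (wB x i) (wB x j) (wB z k) p q r ≠ 0 := by decide

set_option maxHeartbeats 4000000 in
set_option synthInstance.maxHeartbeats 400000 in
set_option synthInstance.maxSize 4096 in
lemma factB : ∀ x1 i1 x2 i2 x3 i3 x4 i4 : Fin 4,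
    x1 ≠ x2 → x1 ≠ x3 → x1 ≠ x4 → x2 ≠ x3 → x2 ≠ x4 → x3 ≠ x4 →
    (∃ p q r, m3 (wB x1 i1) (wB x2 i2) (wB x3 i3) p q r ≠ 0) ∨
    (∃ p q r, m3 (wB x1 i1) (wB x2 i2) (wB x4 i4) p q r ≠ 0) ∨
    (∃ p q r, m3 (wB x1 i1) (wB x3 i3) (wB x4 i4) p q r ≠ 0) ∨
    (∃ p q r, m3 (wB x2 i2) (wB x3 i3) (wB x4 i4) p q r ≠ 0) := by decide

lemma ptB_inj {x i y j : Fin 4} (h : ptB x i = ptB y j) : x = y ∧ i = j := by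
  by_contra hc
  obtain ⟨p, q, hm⟩ := factPair x i y j hc
  have hind := indep2 x i y j p q hm
  rw [linearIndependent_fin2] at hind
  rw [ptB, ptB, Projectivization.mk_eq_mk_iff'] at h
  obtain ⟨a, ha⟩ := h
  exact hind.2 a ha

theorem configB_collinear_quadruples :
    (∀ x, ∃ U : Submodule ℂ (Fin 4 → ℂ), Module.finrank ℂ U = 2 ∧
      ∀ i, Projectivization.submodule (ptB x i) ≤ U) ∧
    ∀ T : Set (ℙ ℂ (Fin 4 → ℂ)), T ⊆ configB → T.ncard = 4 →
      (∃ U : Submodule ℂ (Fin 4 → ℂ), Module.finrank ℂ U = 2 ∧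
        ∀ p ∈ T, Projectivization.submodule p ≤ U) →
      ∃ x, T = ZB x := by
  constructor
  · -- each quadruple is collinear
    intro x
    obtain ⟨p, q, hm⟩ := factPair x 0 x 1 (by simp)
    have hind := indep2 x 0 x 1 p q hm
    have hrange : ({vB x 0, vB x 1} : Set (Fin 4 → ℂ)) = Set.range ![vB x 0, vB x 1] := by
      simp [Matrix.range_cons, Matrix.range_cons_empty, Set.pair_comm]
    refine ⟨Submodule.span ℂ {vB x 0, vB x 1}, ?_, ?_⟩
    · rw [hrange, finrank_span_eq_card hind]; simp
    · intro i
      rw [ptB, Projectivization.submodule_mk, Submodule.span_singleton_le_iff_mem]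
      have e2 : vB x 2 = vB x 0 + vB x 1 := by
        funext l; fin_cases x <;> fin_cases l <;> norm_num [vB] <;> rfl
      have e3 : vB x 3 = vB x 0 - vB x 1 ∨ vB x 3 = vB x 1 - vB x 0 := by
        fin_cases x
        · left; funext l; fin_cases l <;> norm_num [vB] <;> rfl
        · left; funext l; fin_cases l <;> norm_num [vB] <;> rfl
        · left; funext l; fin_cases l <;> norm_num [vB] <;> rfl
        · right; funext l; fin_cases l <;> norm_num [vB] <;> rfl
      fin_cases i
      · exact Submodule.subset_span (by simp)
      · exact Submodule.subset_span (by simp)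
      · rw [Submodule.mem_span_pair]
        refine ⟨1, 1, ?_⟩
        show 1 • vB x 0 + 1 • vB x 1 = vB x 2
        rw [e2]; module
      · rw [Submodule.mem_span_pair]
        rcases e3 with h | h
        · refine ⟨1, -1, ?_⟩
          show (1 : ℂ) • vB x 0 + (-1 : ℂ) • vB x 1 = vB x 3
          rw [h]; module
        · refine ⟨-1, 1, ?_⟩
          show (-1 : ℂ) • vB x 0 + (1 : ℂ) • vB x 1 = vB x 3
          rw [h]; module
  · rintro T hsub hcard ⟨U, hU, hle⟩
    have hTfin : T.Finite := by
      by_contra hf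
      rw [Set.Infinite.ncard (by simpa using hf)] at hcard; omega
    have hmem : ∀ p ∈ T, ∃ x i, ptB x i = p := by
      intro p hp
      have := hsub hp
      simpa only [configB, ZB, Set.mem_iUnion, Set.mem_range] using this
    have hvec : ∀ x i, ptB x i ∈ T → vB x i ∈ U := by
      intro x i h
      have := hle _ h
      rw [ptB, Projectivization.submodule_mk, Submodule.span_singleton_le_iff_mem] at this
      exact this
    have hdep : ∀ u v w : Fin 4 → ℂ, u ∈ U → v ∈ U → w ∈ U →
        ¬LinearIndependent ℂ ![u, v, w] := by
      intro u v w hu hv hw hind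
      have h3 : LinearIndependent ℂ
          (fun t : Fin 3 => (⟨![u, v, w] t, by fin_cases t <;> simp [hu, hv, hw]⟩ : U)) := by
        apply LinearIndependent.of_comp U.subtype
        exact hind
      have hcard3 := h3.fintype_card_le_finrank
      rw [hU] at hcard3
      simp at hcard3
    by_cases hsh : ∃ x i j, i ≠ j ∧ ptB x i ∈ T ∧ ptB x j ∈ T
    · obtain ⟨x, i, j, hij, hi, hj⟩ := hsh
      refine ⟨x, Set.eq_of_subset_of_ncard_le ?_ ?_ (Set.finite_range _)⟩
      · intro p hp
        obtain ⟨z, k, rfl⟩ := hmem p hp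
        rcases eq_or_ne z x with rfl | hzx
        · exact ⟨k, rfl⟩
        · exfalso
          obtain ⟨p', q', r', hm⟩ := factA x i j z k hij hzx
          exact hdep _ _ _ (hvec x i hi) (hvec x j hj) (hvec z k hp)
            (indep3 x i x j z k p' q' r' hm)
      · rw [hcard]
        have himg : ZB x = ptB x '' Set.univ := by rw [Set.image_univ]; rfl
        rw [himg]
        calc (ptB x '' Set.univ).ncard ≤ (Set.univ : Set (Fin 4)).ncard :=
              Set.ncard_image_le Set.finite_univ
          _ = 4 := by rw [Set.ncard_univ]; simp
    · exfalso
      obtain ⟨p1, hp1⟩ := Set.nonempty_of_ncard_ne_zero (s := T) (by omega)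
      have hc1 : (T \ {p1}).ncard = 3 := by
        rw [Set.ncard_diff_singleton_of_mem hp1, hcard]
      obtain ⟨p2, hp2⟩ := Set.nonempty_of_ncard_ne_zero (s := T \ {p1}) (by rw [hc1]; omega)
      have hc2 : ((T \ {p1}) \ {p2}).ncard = 2 := by
        rw [Set.ncard_diff_singleton_of_mem hp2, hc1]
      obtain ⟨p3, hp3⟩ := Set.nonempty_of_ncard_ne_zero (s := (T \ {p1}) \ {p2})
        (by rw [hc2]; omega)
      have hc3 : (((T \ {p1}) \ {p2}) \ {p3}).ncard = 1 := by
        rw [Set.ncard_diff_singleton_of_mem hp3, hc2]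
      obtain ⟨p4, hp4⟩ := Set.nonempty_of_ncard_ne_zero (s := ((T \ {p1}) \ {p2}) \ {p3})
        (by rw [hc3]; omega)
      simp only [Set.mem_diff, Set.mem_singleton_iff] at hp2 hp3 hp4
      obtain ⟨⟨⟨hp4T, h41⟩, h42⟩, h43⟩ := hp4
      obtain ⟨⟨hp3T, h31⟩, h32⟩ := hp3
      obtain ⟨hp2T, h21⟩ := hp2
      obtain ⟨x1, i1, rfl⟩ := hmem p1 hp1
      obtain ⟨x2, i2, rfl⟩ := hmem p2 hp2T
      obtain ⟨x3, i3, rfl⟩ := hmem p3 hp3T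
      obtain ⟨x4, i4, rfl⟩ := hmem p4 hp4T
      have hxd : ∀ a b c d : Fin 4, ptB a b ∈ T → ptB c d ∈ T →
          ptB a b ≠ ptB c d → a ≠ c := by
        intro a b c d ha hc hne h
        subst h
        exact hsh ⟨a, b, d, fun hbd => hne (by rw [hbd]), ha, hc⟩
      have hx12 := hxd _ _ _ _ hp1 hp2T (Ne.symm h21)
      have hx13 := hxd _ _ _ _ hp1 hp3T (Ne.symm h31)
      have hx14 := hxd _ _ _ _ hp1 hp4T (Ne.symm h41)
      have hx23 := hxd _ _ _ _ hp2T hp3T (Ne.symm h32)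
      have hx24 := hxd _ _ _ _ hp2T hp4T (Ne.symm h42)
      have hx34 := hxd _ _ _ _ hp3T hp4T (Ne.symm h43)
      rcases factB x1 i1 x2 i2 x3 i3 x4 i4 hx12 hx13 hx14 hx23 hx24 hx34 with
        ⟨p, q, r, hm⟩ | ⟨p, q, r, hm⟩ | ⟨p, q, r, hm⟩ | ⟨p, q, r, hm⟩
      · exact hdep _ _ _ (hvec _ _ hp1) (hvec _ _ hp2T) (hvec _ _ hp3T)
          (indep3 _ _ _ _ _ _ p q r hm)
      · exact hdep _ _ _ (hvec _ _ hp1) (hvec _ _ hp2T) (hvec _ _ hp4T)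
          (indep3 _ _ _ _ _ _ p q r hm)
      · exact hdep _ _ _ (hvec _ _ hp1) (hvec _ _ hp3T) (hvec _ _ hp4T)
          (indep3 _ _ _ _ _ _ p q r hm)
      · exact hdep _ _ _ (hvec _ _ hp2T) (hvec _ _ hp3T) (hvec _ _ hp4T)
          (indep3 _ _ _ _ _ _ p q r hm)
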